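/- For fixed m and any k ≥ 0, h > 0, the QSD of the voter model on K_{n,m} satisfies lim_{n→∞} μ_{n,m}(k,h) = 0. -/

import Mathlib

open Filter

set_option maxHeartbeats 1000000


/-- `μ` together with eigenvalue `l` is the (unique) quasi-stationary distribution of the
2-opinion voter model on the complete bipartite graph `K_{n,m}`, tracked by the pair
`(k,h)` of 'yes' counts in the parts of sizes `n` and `m`.  `μ` is extended by `0` outside
the grid `{0,…,n}×{0,…,m}`; the absorbing states `(0,0),(n,m)` and the unreachable states
`(0,m),(n,0)` carry zero mass; `μ` is a probability vector satisfying the left-eigenvector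
equation with eigenvalue `l`, and is invariant under relabeling of the two opinions. -/
structure IsBipartiteVoterQSD (n m : ℕ) (μ : ℤ → ℤ → ℝ) (l : ℝ) : Prop where
  nonneg : ∀ k h : ℤ, 0 ≤ μ k h
  zero_outside : ∀ k h : ℤ, (k < 0 ∨ (n : ℤ) < k ∨ h < 0 ∨ (m : ℤ) < h) → μ k h = 0
  zero_corner₁ : μ 0 0 = 0
  zero_corner₂ : μ n m = 0
  zero_bp₁ : μ 0 m = 0
  zero_bp₂ : μ n 0 = 0
  sum_one : ∑ k ∈ Finset.Icc (0 : ℤ) n, ∑ h ∈ Finset.Icc (0 : ℤ) m, μ k h = 1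
  symm : ∀ k h : ℤ, μ k h = μ (n - k) (m - h)
  eigen : ∀ k h : ℤ, 0 ≤ k → k ≤ n → 0 ≤ h → h ≤ m →
    ¬(k = 0 ∧ h = 0) → ¬(k = n ∧ h = m) →
    l * μ k h
      = μ k h * (((k : ℝ) * h + ((n : ℝ) - k) * ((m : ℝ) - h)) / ((n : ℝ) * m))
        + μ (k - 1) h * ((((n : ℝ) - k + 1) * h) / ((m : ℝ) * ((n : ℝ) + m)))
        + μ (k + 1) h * ((((k : ℝ) + 1) * ((m : ℝ) - h)) / ((m : ℝ) * ((n : ℝ) + m)))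
        + μ k (h - 1) * ((((m : ℝ) - h + 1) * k) / ((n : ℝ) * ((n : ℝ) + m)))
        + μ k (h + 1) * ((((h : ℝ) + 1) * ((n : ℝ) - k)) / ((n : ℝ) * ((n : ℝ) + m)))


/-- For fixed `m` and any `k ≥ 0`, `h > 0`, the QSD of the voter model on `K_{n,m}`
satisfies `lim_{n→∞} μ_{n,m}(k,h) = 0`. -/
lemma qsd_le_one {n m : ℕ} {μ : ℤ → ℤ → ℝ} {l : ℝ} (q : IsBipartiteVoterQSD n m μ l)
    (k h : ℤ) : μ k h ≤ 1 := by
  by_cases hout : k < 0 ∨ (n:ℤ) < k ∨ h < 0 ∨ (m:ℤ) < h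
  · rw [q.zero_outside k h hout]; norm_num
  · push_neg at hout
    obtain ⟨h1, h2, h3, h4⟩ := hout
    calc μ k h ≤ ∑ h' ∈ Finset.Icc (0:ℤ) m, μ k h' :=
          Finset.single_le_sum (fun i _ => q.nonneg k i) (Finset.mem_Icc.mpr ⟨h3, h4⟩)
      _ ≤ ∑ k' ∈ Finset.Icc (0:ℤ) n, ∑ h' ∈ Finset.Icc (0:ℤ) m, μ k' h' :=
          Finset.single_le_sum (fun i _ => Finset.sum_nonneg fun j _ => q.nonneg i j)
            (Finset.mem_Icc.mpr ⟨h1, h2⟩)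
      _ = 1 := q.sum_one

lemma qsd_key_step (m : ℕ) (hm : 1 ≤ m)
    (μ : ℕ → ℤ → ℤ → ℝ)
    (hμ : ∀ n : ℕ, m ≤ n → 3 ≤ n → IsBipartiteVoterQSD n m (μ n)
      (1 - (2 * (1 - Real.sqrt (1 - 1 / (2 * (n : ℝ)) - 1 / (2 * (m : ℝ)))))
        / ((n : ℝ) + m)))
    (k h : ℤ) (hk : 0 ≤ k) (hh : 0 < h) (hhm : h ≤ (m:ℤ))
    (prev : Filter.Tendsto (fun n : ℕ => μ n (k-1) h) Filter.atTop (nhds 0)) :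
    Filter.Tendsto (fun n : ℕ => μ n k h) Filter.atTop (nhds 0) := by
  set Cst : ℝ := ((k:ℝ)+1) + ((m:ℝ)+1)*(k:ℝ) + ((m:ℝ)+1) with hCst
  set D : ℝ := 2*(m:ℝ)*Cst/(h:ℝ) with hD
  have hM1 : (1:ℝ) ≤ (m:ℝ) := by exact_mod_cast hm
  have hH1 : (1:ℝ) ≤ (h:ℝ) := by exact_mod_cast hh
  have hHM : (h:ℝ) ≤ (m:ℝ) := by exact_mod_cast hhm
  have hK0 : (0:ℝ) ≤ (k:ℝ) := by exact_mod_cast hk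
  have hbound : ∀ᶠ n : ℕ in atTop,
      0 ≤ μ n k h ∧ μ n k h ≤ 2 * μ n (k-1) h + D / (n:ℝ) := by
    rw [eventually_atTop]
    refine ⟨max (max m 3) (max (8*m) (4*k.toNat)), fun n hn => ?_⟩
    have hnm : m ≤ n := le_trans (le_trans (le_max_left m 3) (le_max_left _ _)) hn
    have hn3 : 3 ≤ n := le_trans (le_trans (le_max_right m 3) (le_max_left _ _)) hn
    have hn8 : 8*m ≤ n := le_trans (le_trans (le_max_left (8*m) _) (le_max_right _ _)) hn
    have hn4 : 4*k.toNat ≤ n := le_trans (le_trans (le_max_right (8*m) _) (le_max_right _ _)) hn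
    have q := hμ n hnm hn3
    refine ⟨q.nonneg k h, ?_⟩
    have hN3 : (3:ℝ) ≤ (n:ℝ) := by exact_mod_cast hn3
    have hN8 : 8*(m:ℝ) ≤ (n:ℝ) := by exact_mod_cast hn8
    have hN4 : 4*(k:ℝ) ≤ (n:ℝ) := by
      have h4 : 4*k ≤ (n:ℤ) := by omega
      exact_mod_cast h4
    have hN0 : (0:ℝ) < (n:ℝ) := by linarith
    have hM0 : (0:ℝ) < (m:ℝ) := by linarith
    have hH0 : (0:ℝ) < (h:ℝ) := by linarith
    have hNM0 : (0:ℝ) < (n:ℝ) + m := by linarith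
    have hMne : ((m:ℝ)) ≠ 0 := ne_of_gt hM0
    have hNne : ((n:ℝ)) ≠ 0 := ne_of_gt hN0
    have hHne : ((h:ℝ)) ≠ 0 := ne_of_gt hH0
    -- prerequisites for eigen equation
    have hkn : k ≤ (n:ℤ) := by omega
    have hklt : k < (n:ℤ) := by omega
    have E := q.eigen k h hk hkn hh.le hhm (by omega) (by omega)
    set s := Real.sqrt (1 - 1 / (2 * (n : ℝ)) - 1 / (2 * (m : ℝ))) with hs
    have hs0 : 0 ≤ s := Real.sqrt_nonneg _
    -- spectral gap
    have hld : (h:ℝ)/(2*(m:ℝ)) ≤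
        (1 - (2 * (1 - s)) / ((n : ℝ) + m))
          - (((k : ℝ) * h + ((n : ℝ) - k) * ((m : ℝ) - h)) / ((n : ℝ) * m)) := by
      have i0 : (2 * (1 - s)) / ((n : ℝ) + m) ≤ 2 / ((n:ℝ) + m) := by
        gcongr
        linarith
      have i1 : (2:ℝ) / ((n:ℝ)+m) ≤ (h:ℝ)/(4*m) := by
        rw [div_le_div_iff₀ hNM0 (by positivity)]
        nlinarith
      have i2 : ((k : ℝ) * h + ((n : ℝ) - k) * ((m : ℝ) - h)) / ((n : ℝ) * m)
          ≤ (k:ℝ)*h/((n:ℝ)*m) + ((m:ℝ)-h)/(m:ℝ) := by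
        have : (k:ℝ)*h/((n:ℝ)*m) + ((m:ℝ)-h)/(m:ℝ)
            = ((k : ℝ) * h + (n : ℝ) * ((m : ℝ) - h)) / ((n : ℝ) * m) := by
          field_simp
        rw [this]
        gcongr <;> nlinarith
      have i3 : (k:ℝ)*h/((n:ℝ)*m) ≤ (h:ℝ)/(4*m) := by
        rw [div_le_div_iff₀ (by positivity) (by positivity)]
        nlinarith [mul_le_mul_of_nonneg_right hN4 (mul_pos hH0 hM0).le]
      have i4 : ((m:ℝ)-h)/(m:ℝ) = 1 - (h:ℝ)/m := by field_simp
      have i5 : (h:ℝ)/(4*m) + (h:ℝ)/(4*m) + (h:ℝ)/(2*m) = (h:ℝ)/m := by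
        field_simp
        ring
      linarith
    -- coefficient bounds
    have ha : (((n : ℝ) - k + 1) * h) / ((m : ℝ) * ((n : ℝ) + m)) ≤ (h:ℝ)/(m:ℝ) := by
      rw [div_le_div_iff₀ (by positivity) hM0]
      nlinarith [mul_nonneg (mul_pos hH0 hM0).le (by linarith : (0:ℝ) ≤ (m:ℝ) + k - 1)]
    have ba : μ n (k-1) h * ((((n : ℝ) - k + 1) * h) / ((m : ℝ) * ((n : ℝ) + m)))
        ≤ μ n (k-1) h * ((h:ℝ)/(m:ℝ)) :=
      mul_le_mul_of_nonneg_left ha (q.nonneg (k-1) h)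
    have bb : μ n (k+1) h * ((((k : ℝ) + 1) * ((m : ℝ) - h)) / ((m : ℝ) * ((n : ℝ) + m)))
        ≤ ((k:ℝ)+1)/(n:ℝ) := by
      have c0 : (0:ℝ) ≤ (((k : ℝ) + 1) * ((m : ℝ) - h)) / ((m : ℝ) * ((n : ℝ) + m)) :=
        div_nonneg (by nlinarith) (by positivity)
      calc μ n (k+1) h * ((((k : ℝ) + 1) * ((m : ℝ) - h)) / ((m : ℝ) * ((n : ℝ) + m)))
          ≤ 1 * ((((k : ℝ) + 1) * ((m : ℝ) - h)) / ((m : ℝ) * ((n : ℝ) + m))) :=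
            mul_le_mul_of_nonneg_right (qsd_le_one q _ _) c0
        _ = (((k : ℝ) + 1) * ((m : ℝ) - h)) / ((m : ℝ) * ((n : ℝ) + m)) := one_mul _
        _ ≤ ((k:ℝ)+1)/(n:ℝ) := by
            rw [div_le_div_iff₀ (by positivity) hN0]
            nlinarith [mul_nonneg hK0 (mul_pos hM0 hM0).le,
              mul_nonneg hK0 (mul_pos hH0 hN0).le, mul_pos hM0 hM0, mul_pos hH0 hN0]
    have bc : μ n k (h-1) * ((((m : ℝ) - h + 1) * k) / ((n : ℝ) * ((n : ℝ) + m)))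
        ≤ ((m:ℝ)+1)*k/(n:ℝ) := by
      have c0 : (0:ℝ) ≤ (((m : ℝ) - h + 1) * k) / ((n : ℝ) * ((n : ℝ) + m)) :=
        div_nonneg (by nlinarith) (by positivity)
      have hstep : ((m:ℝ) - h + 1) ≤ ((m:ℝ)+1) * ((n:ℝ)+m) := by nlinarith
      calc μ n k (h-1) * ((((m : ℝ) - h + 1) * k) / ((n : ℝ) * ((n : ℝ) + m)))
          ≤ 1 * ((((m : ℝ) - h + 1) * k) / ((n : ℝ) * ((n : ℝ) + m))) :=
            mul_le_mul_of_nonneg_right (qsd_le_one q _ _) c0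
        _ = (((m : ℝ) - h + 1) * k) / ((n : ℝ) * ((n : ℝ) + m)) := one_mul _
        _ ≤ ((m:ℝ)+1)*k/(n:ℝ) := by
            rw [div_le_div_iff₀ (by positivity) hN0]
            nlinarith [mul_nonneg (mul_nonneg hK0 hN0.le) (sub_nonneg.mpr hstep)]
    have bd : μ n k (h+1) * ((((h : ℝ) + 1) * ((n : ℝ) - k)) / ((n : ℝ) * ((n : ℝ) + m)))
        ≤ ((m:ℝ)+1)/(n:ℝ) := by
      have c0 : (0:ℝ) ≤ (((h : ℝ) + 1) * ((n : ℝ) - k)) / ((n : ℝ) * ((n : ℝ) + m)) :=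
        div_nonneg (by nlinarith) (by positivity)
      have hb1 : ((h:ℝ)+1)*((n:ℝ)-k) ≤ ((m:ℝ)+1)*((n:ℝ)+m) :=
        mul_le_mul (by linarith) (by linarith) (by linarith) (by linarith)
      calc μ n k (h+1) * ((((h : ℝ) + 1) * ((n : ℝ) - k)) / ((n : ℝ) * ((n : ℝ) + m)))
          ≤ 1 * ((((h : ℝ) + 1) * ((n : ℝ) - k)) / ((n : ℝ) * ((n : ℝ) + m))) :=
            mul_le_mul_of_nonneg_right (qsd_le_one q _ _) c0
        _ = (((h : ℝ) + 1) * ((n : ℝ) - k)) / ((n : ℝ) * ((n : ℝ) + m)) := one_mul _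
        _ ≤ ((m:ℝ)+1)/(n:ℝ) := by
            rw [div_le_div_iff₀ (by positivity) hN0]
            nlinarith [mul_le_mul_of_nonneg_right hb1 hN0.le]
    -- main chain
    have step : ((h:ℝ)/(2*(m:ℝ))) * μ n k h ≤ μ n (k-1) h * ((h:ℝ)/(m:ℝ)) + Cst/(n:ℝ) := by
      have e1 : ((h:ℝ)/(2*(m:ℝ))) * μ n k h ≤
          ((1 - (2 * (1 - s)) / ((n : ℝ) + m))
            - (((k : ℝ) * h + ((n : ℝ) - k) * ((m : ℝ) - h)) / ((n : ℝ) * m))) * μ n k h :=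
        mul_le_mul_of_nonneg_right hld (q.nonneg k h)
      have e2 : ((1 - (2 * (1 - s)) / ((n : ℝ) + m))
            - (((k : ℝ) * h + ((n : ℝ) - k) * ((m : ℝ) - h)) / ((n : ℝ) * m))) * μ n k h
          = μ n (k - 1) h * ((((n : ℝ) - k + 1) * h) / ((m : ℝ) * ((n : ℝ) + m)))
            + μ n (k + 1) h * ((((k : ℝ) + 1) * ((m : ℝ) - h)) / ((m : ℝ) * ((n : ℝ) + m)))
            + μ n k (h - 1) * ((((m : ℝ) - h + 1) * k) / ((n : ℝ) * ((n : ℝ) + m)))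
            + μ n k (h + 1) * ((((h : ℝ) + 1) * ((n : ℝ) - k)) / ((n : ℝ) * ((n : ℝ) + m))) := by
        rw [sub_mul]
        linarith [E]
      have e3 : Cst/(n:ℝ) = ((k:ℝ)+1)/(n:ℝ) + ((m:ℝ)+1)*k/(n:ℝ) + ((m:ℝ)+1)/(n:ℝ) := by
        rw [hCst]; ring
      rw [e3]
      linarith
    have h2pos : (0:ℝ) < (h:ℝ)/(2*(m:ℝ)) := by positivity
    rw [← mul_le_mul_iff_right₀ h2pos]
    have expand : (h:ℝ)/(2*(m:ℝ)) * (2 * μ n (k-1) h + D / (n:ℝ))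
        = μ n (k-1) h * ((h:ℝ)/(m:ℝ)) + Cst/(n:ℝ) := by
      rw [hD]
      field_simp
    rw [expand]
    exact step
  have hlim : Filter.Tendsto (fun n : ℕ => 2 * μ n (k-1) h + D / (n:ℝ)) atTop (nhds 0) := by
    have := (prev.const_mul 2).add (tendsto_const_div_atTop_nhds_zero_nat D)
    simpa using this
  refine tendsto_of_tendsto_of_tendsto_of_le_of_le' tendsto_const_nhds hlim ?_ ?_
  · exact hbound.mono fun n hn => hn.1
  · exact hbound.mono fun n hn => hn.2

theorem bipartite_qsd_small_part_vanishes (m : ℕ) (hm : 1 ≤ m)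
    (μ : ℕ → ℤ → ℤ → ℝ)
    (hμ : ∀ n : ℕ, m ≤ n → 3 ≤ n → IsBipartiteVoterQSD n m (μ n)
      (1 - (2 * (1 - Real.sqrt (1 - 1 / (2 * (n : ℝ)) - 1 / (2 * (m : ℝ)))))
        / ((n : ℝ) + m))) :
    ∀ k h : ℤ, 0 ≤ k → 0 < h → h ≤ (m : ℤ) →
      Filter.Tendsto (fun n : ℕ => μ n k h) Filter.atTop (nhds 0) := by
  intro k h hk hh hhm
  have base : ∀ K : ℕ, Filter.Tendsto (fun n : ℕ => μ n (K:ℤ) h) Filter.atTop (nhds 0) := by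
    intro K
    induction K with
    | zero =>
        apply qsd_key_step m hm μ hμ 0 h le_rfl hh hhm
        have : ∀ᶠ n : ℕ in atTop, μ n (0-1) h = 0 := by
          rw [eventually_atTop]
          exact ⟨max m 3, fun n hn => (hμ n (le_trans (le_max_left m 3) hn)
            (le_trans (le_max_right m 3) hn)).zero_outside _ h (Or.inl (by norm_num))⟩
        exact Tendsto.congr' (this.mono fun n hn => hn.symm) tendsto_const_nhds
    | succ K ih =>
        have e : ((K+1:ℕ):ℤ) = (K:ℤ)+1 := by push_cast; ring
        rw [e]
        apply qsd_key_step m hm μ hμ ((K:ℤ)+1) h (by positivity) hh hhm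
        have e2 : (K:ℤ)+1-1 = (K:ℤ) := by ring
        rw [e2]
        exact ih
  have hkk : k = (k.toNat : ℤ) := (Int.toNat_of_nonneg hk).symm
  rw [hkk]
  exact base k.toNat
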